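/- Let 0 ≤ α < 1/2, t > 0, d ∈ (0, π/2), and M, ω ≥ 0. Suppose |F(ψ_t(u+iv))| ≤ M·|ψ_t(u+iv)|^{−2α}·e^{ω·Re(ψ_t(u+iv))} for all u ∈ ℝ, |v| ≤ d. Then the integral of |F| over the vertical segment ψ_t(u + i[−d,d]) is bounded by 2·M·π·e^{ωt}·t^{1−2α}·(√2)^{2α}, uniformly in u ∈ ℝ. -/

import Mathlib

open Complex Real Set

set_option maxHeartbeats 1000000

/-- Let `0 ≤ α < 1/2`, `t > 0`, `0 < d < π/2` and `M, ω ≥ 0`. If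
`|F(ψ_t(u+iv))| ≤ M |ψ_t(u+iv)|^{-2α} e^{ω Re ψ_t(u+iv)}` for all `u ∈ ℝ`, `|v| ≤ d`,
where `ψ_t(w) = t e^w/(e^w+1)`, then the integral of `|F|` over the vertical segment
`ψ_t(u + i[-d,d])` is bounded by `2 M π e^{ωt} t^{1-2α} (√2)^{2α}`, uniformly in `u`. -/
theorem stmt6 (α t d M ω : ℝ) (hα0 : 0 ≤ α) (hα : α < 1 / 2) (ht : 0 < t)
    (hd0 : 0 < d) (hd : d < π / 2) (hM : 0 ≤ M) (hω : 0 ≤ ω)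
    (F ψ : ℂ → ℂ)
    (hψ : ∀ w : ℂ, ψ w = (t : ℂ) * Complex.exp w / (Complex.exp w + 1))
    (hF : ∀ u v : ℝ, |v| ≤ d →
      ‖F (ψ ((u : ℂ) + (v : ℂ) * Complex.I))‖
        ≤ M * ‖ψ ((u : ℂ) + (v : ℂ) * Complex.I)‖ ^ (-(2 * α)) *
            Real.exp (ω * (ψ ((u : ℂ) + (v : ℂ) * Complex.I)).re)) :
    ∀ u : ℝ,
      (∫ v in Set.Icc (-d) d,
          ‖F (ψ ((u : ℂ) + (v : ℂ) * Complex.I))‖ *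
            ‖deriv (fun s : ℝ => ψ ((u : ℂ) + (s : ℂ) * Complex.I)) v‖)
        ≤ 2 * M * π * Real.exp (ω * t) * t ^ (1 - 2 * α) * Real.sqrt 2 ^ (2 * α) := by
  intro u
  set C : ℝ := M * t ^ (1 - 2 * α) * Real.exp (ω * t) with hCdef
  have hC0 : 0 ≤ C := by positivity
  have hs1 : (1 : ℝ) ≤ Real.sqrt 2 ^ (2 * α) := by
    have h12 : (1 : ℝ) ≤ Real.sqrt 2 := by
      nlinarith [Real.sq_sqrt (by norm_num : (0:ℝ) ≤ 2), Real.sqrt_nonneg 2]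
    calc (1:ℝ) = Real.sqrt 2 ^ (0:ℝ) := by simp
      _ ≤ Real.sqrt 2 ^ (2 * α) :=
        Real.rpow_le_rpow_of_exponent_le h12 (by linarith)
  have hRHS : 2 * d * C ≤ 2 * M * π * Real.exp (ω * t) * t ^ (1 - 2 * α) * Real.sqrt 2 ^ (2 * α) := by
    have h : 2 * M * π * Real.exp (ω * t) * t ^ (1 - 2 * α) * Real.sqrt 2 ^ (2 * α)
        = 2 * π * Real.sqrt 2 ^ (2 * α) * C := by rw [hCdef]; ring
    rw [h]
    nlinarith [Real.pi_pos, mul_nonneg hC0 (by linarith : (0:ℝ) ≤ Real.sqrt 2 ^ (2*α) - 1),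
      mul_nonneg hC0 (by linarith [Real.pi_pos] : (0:ℝ) ≤ π - 2 * d)]
  have hRHS0 : (0:ℝ) ≤ 2 * M * π * Real.exp (ω * t) * t ^ (1 - 2 * α) * Real.sqrt 2 ^ (2 * α) := by
    nlinarith [mul_nonneg (mul_nonneg (le_of_lt hd0) hC0) (by norm_num : (0:ℝ) ≤ 2)]
  -- pointwise bound
  have key : ∀ v ∈ Icc (-d) d,
      ‖F (ψ ((u : ℂ) + (v : ℂ) * Complex.I))‖ *
        ‖deriv (fun s : ℝ => ψ ((u : ℂ) + (s : ℂ) * Complex.I)) v‖ ≤ C := by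
    intro v hv
    have hvabs : |v| ≤ d := abs_le.2 ⟨hv.1, hv.2⟩
    set w : ℂ := (u : ℂ) + (v : ℂ) * Complex.I with hwdef
    have hw_re : w.re = u := by simp [hwdef]
    have hw_im : w.im = v := by simp [hwdef]
    have hcos : 0 ≤ Real.cos v :=
      Real.cos_nonneg_of_mem_Icc ⟨by linarith [abs_le.1 hvabs |>.1], by linarith [abs_le.1 hvabs |>.2]⟩
    have heu : 0 < Real.exp u := Real.exp_pos u
    have hre : (Complex.exp w + 1).re = Real.exp u * Real.cos v + 1 := by
      simp [Complex.add_re, Complex.exp_re, hw_re, hw_im]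
    have him : (Complex.exp w + 1).im = Real.exp u * Real.sin v := by
      simp [Complex.add_im, Complex.exp_im, hw_re, hw_im]
    have hne : Complex.exp w + 1 ≠ 0 := by
      intro h
      rw [h] at hre
      simp at hre
      nlinarith
    set A : ℝ := ‖Complex.exp w + 1‖ with hAdef
    have hA0 : 0 < A := norm_pos_iff.2 hne
    have hA2 : A ^ 2 = Real.exp u ^ 2 + 2 * Real.exp u * Real.cos v + 1 := by
      rw [hAdef, Complex.sq_norm, Complex.normSq_apply, hre, him]
      nlinarith [Real.sin_sq_add_cos_sq v]
    have hA1 : 1 ≤ A := by nlinarith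
    have hAe : Real.exp u ≤ A := by nlinarith
    have hψabs : ‖ψ w‖ = t * Real.exp u / A := by
      rw [hψ w, norm_div, norm_mul, Complex.norm_real, Real.norm_eq_abs,
        Complex.norm_exp, hw_re, abs_of_pos ht, hAdef]
    have hrt : t * Real.exp u / A ≤ t := by
      rw [div_le_iff₀ hA0]; nlinarith
    have hr0 : 0 < t * Real.exp u / A := by positivity
    have hψle : ‖ψ w‖ ≤ t := by rw [hψabs]; exact hrt
    have hrele : (ψ w).re ≤ t :=
      le_trans (le_trans (le_abs_self _) (Complex.abs_re_le_norm _)) hψle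
    have hexple : Real.exp (ω * (ψ w).re) ≤ Real.exp (ω * t) :=
      Real.exp_le_exp.2 (mul_le_mul_of_nonneg_left hrele hω)
    -- derivative
    have hd1 : HasDerivAt (fun s : ℝ => (u : ℂ) + (s : ℂ) * Complex.I) (1 * Complex.I) v := by
      have h0 : HasDerivAt (fun s : ℝ => (s : ℂ)) 1 v := by
        simpa using (hasDerivAt_id v).ofReal_comp
      exact (h0.mul_const Complex.I).const_add _
    have hd2 : HasDerivAt (fun s : ℝ => Complex.exp ((u : ℂ) + (s : ℂ) * Complex.I))
        (Complex.exp w * (1 * Complex.I)) v := by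
      simpa [hwdef] using hd1.cexp
    have hd3 : HasDerivAt (fun s : ℝ => (t : ℂ) * Complex.exp ((u : ℂ) + (s : ℂ) * Complex.I)
          / (Complex.exp ((u : ℂ) + (s : ℂ) * Complex.I) + 1))
        (((t : ℂ) * (Complex.exp w * (1 * Complex.I)) * (Complex.exp w + 1)
          - (t : ℂ) * Complex.exp w * (Complex.exp w * (1 * Complex.I))) / (Complex.exp w + 1) ^ 2)
        v := by
      exact (hd2.const_mul (t : ℂ)).div (hd2.add_const 1) (by simpa [hwdef] using hne)
    have hDval : ((t : ℂ) * (Complex.exp w * (1 * Complex.I)) * (Complex.exp w + 1)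
          - (t : ℂ) * Complex.exp w * (Complex.exp w * (1 * Complex.I))) / (Complex.exp w + 1) ^ 2
        = (t : ℂ) * Complex.exp w * Complex.I / (Complex.exp w + 1) ^ 2 := by
      field_simp
      ring
    have hderiv : deriv (fun s : ℝ => ψ ((u : ℂ) + (s : ℂ) * Complex.I)) v
        = (t : ℂ) * Complex.exp w * Complex.I / (Complex.exp w + 1) ^ 2 := by
      have hfun : (fun s : ℝ => ψ ((u : ℂ) + (s : ℂ) * Complex.I))
          = fun s : ℝ => (t : ℂ) * Complex.exp ((u : ℂ) + (s : ℂ) * Complex.I)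
              / (Complex.exp ((u : ℂ) + (s : ℂ) * Complex.I) + 1) := funext fun s => hψ _
      rw [hfun, hd3.deriv, hDval]
    have hnormD : ‖deriv (fun s : ℝ => ψ ((u : ℂ) + (s : ℂ) * Complex.I)) v‖
        = t * Real.exp u / A ^ 2 := by
      rw [hderiv, norm_div, norm_mul, norm_mul, norm_pow,
        Complex.norm_I, Complex.norm_real, Real.norm_eq_abs, Complex.norm_exp, hw_re, abs_of_pos ht, hAdef,
        mul_one]
    have hstep : ‖ψ w‖ ^ (-(2 * α)) *
        ‖deriv (fun s : ℝ => ψ ((u : ℂ) + (s : ℂ) * Complex.I)) v‖ ≤ t ^ (1 - 2 * α) := by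
      rw [hnormD, hψabs]
      set r : ℝ := t * Real.exp u / A with hrdef
      have hrA : t * Real.exp u / A ^ 2 = r / A := by
        rw [hrdef]; field_simp
      rw [hrA]
      calc r ^ (-(2 * α)) * (r / A) = r ^ (1 - 2 * α) / A := by
            rw [show (1 - 2 * α) = -(2 * α) + 1 by ring, Real.rpow_add hr0, Real.rpow_one]
            ring
        _ ≤ r ^ (1 - 2 * α) := div_le_self (Real.rpow_nonneg hr0.le _) hA1
        _ ≤ t ^ (1 - 2 * α) := Real.rpow_le_rpow hr0.le hrt (by linarith)
    calc ‖F (ψ w)‖ * ‖deriv (fun s : ℝ => ψ ((u : ℂ) + (s : ℂ) * Complex.I)) v‖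
        ≤ (M * ‖ψ w‖ ^ (-(2 * α)) * Real.exp (ω * (ψ w).re)) *
            ‖deriv (fun s : ℝ => ψ ((u : ℂ) + (s : ℂ) * Complex.I)) v‖ :=
          mul_le_mul_of_nonneg_right (hF u v hvabs) (norm_nonneg _)
      _ = (M * Real.exp (ω * (ψ w).re)) * (‖ψ w‖ ^ (-(2 * α)) *
            ‖deriv (fun s : ℝ => ψ ((u : ℂ) + (s : ℂ) * Complex.I)) v‖) := by ring
      _ ≤ (M * Real.exp (ω * t)) * t ^ (1 - 2 * α) := by
          apply mul_le_mul
          · exact mul_le_mul_of_nonneg_left hexple hM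
          · exact hstep
          · positivity
          · positivity
      _ = C := by rw [hCdef]; ring
  by_cases hint : MeasureTheory.IntegrableOn (fun v : ℝ =>
      ‖F (ψ ((u : ℂ) + (v : ℂ) * Complex.I))‖ *
        ‖deriv (fun s : ℝ => ψ ((u : ℂ) + (s : ℂ) * Complex.I)) v‖) (Icc (-d) d) MeasureTheory.volume
  · have h1 := MeasureTheory.setIntegral_mono_on hint
      (MeasureTheory.integrableOn_const measure_Icc_lt_top.ne) measurableSet_Icc key
    have h2 : (∫ _ in Icc (-d) d, C) = 2 * d * C := by
      rw [MeasureTheory.setIntegral_const, Real.volume_real_Icc_of_le (by linarith), smul_eq_mul]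
      ring
    calc (∫ v in Icc (-d) d,
          ‖F (ψ ((u : ℂ) + (v : ℂ) * Complex.I))‖ *
            ‖deriv (fun s : ℝ => ψ ((u : ℂ) + (s : ℂ) * Complex.I)) v‖)
        ≤ ∫ _ in Icc (-d) d, C := h1
      _ = 2 * d * C := h2
      _ ≤ _ := hRHS
  · rw [MeasureTheory.integral_undef hint]
    exact hRHS0
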